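/- Let Γ be a finite folded X-digraph that is core with respect to a vertex v, and suppose L(Γ, v) contains a nontrivial cyclically reduced element. Then Type(Γ) = Γ, i.e., Core(Γ, u) = Γ for every vertex u of Γ. -/

import Mathlib

/-- An `X`-digraph: a directed graph whose edges are labeled by elements of `X`. -/
structure XDigraph (X : Type) where
  V : Type
  E : Type
  o : E → V
  t : E → V
  lab : E → X

namespace XDigraph

variable {X : Type}

/-- `Γ` is folded: no vertex has two distinct outgoing edges with the same label, nor
two distinct incoming edges with the same label. -/
def Folded (Γ : XDigraph X) : Prop :=
  (∀ e f : Γ.E, Γ.o e = Γ.o f → Γ.lab e = Γ.lab f → e = f) ∧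
  (∀ e f : Γ.E, Γ.t e = Γ.t f → Γ.lab e = Γ.lab f → e = f)

/-- A directed edge of `Γ̂`: an edge of `Γ` together with a direction of traversal
(`true` = forwards, `false` = backwards). -/
abbrev DEdge (Γ : XDigraph X) : Type := Γ.E × Bool

/-- Origin of a directed edge. -/
def dO (Γ : XDigraph X) (d : DEdge Γ) : Γ.V := if d.2 then Γ.o d.1 else Γ.t d.1

/-- Terminus of a directed edge. -/
def dT (Γ : XDigraph X) (d : DEdge Γ) : Γ.V := if d.2 then Γ.t d.1 else Γ.o d.1

/-- `IsPath Γ u v p`: the list `p` of directed edges is a path from `u` to `v`. -/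
def IsPath (Γ : XDigraph X) : Γ.V → Γ.V → List (DEdge Γ) → Prop
  | u, v, [] => u = v
  | u, v, d :: p => Γ.dO d = u ∧ IsPath Γ (Γ.dT d) v p

/-- A path is reduced if it never immediately backtracks along the same edge. -/
def Reduced (Γ : XDigraph X) (p : List (DEdge Γ)) : Prop :=
  List.Chain' (fun d₁ d₂ => d₂ ≠ (d₁.1, !d₁.2)) p

/-- The label of a path, as an element of the free group `F(X)`: a reversed edge
contributes the inverse of its label. -/
def plabel (Γ : XDigraph X) (p : List (DEdge Γ)) : FreeGroup X :=
  FreeGroup.mk (p.map fun d => (Γ.lab d.1, d.2))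

/-- The language `L(Γ, v)`: labels of reduced closed paths at `v`. -/
def LSet (Γ : XDigraph X) (v : Γ.V) : Set (FreeGroup X) :=
  {g | ∃ p : List (DEdge Γ), Γ.IsPath v v p ∧ Γ.Reduced p ∧ g = Γ.plabel p}

/-- `Γ` is a core graph with respect to `v`: every vertex and every edge of `Γ` lies
on some reduced closed path at `v`. -/
def IsCore (Γ : XDigraph X) (v : Γ.V) : Prop :=
  (∀ u : Γ.V, u = v ∨ ∃ p : List (DEdge Γ), Γ.IsPath v v p ∧ Γ.Reduced p ∧
      ∃ d ∈ p, Γ.dO d = u ∨ Γ.dT d = u) ∧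
  (∀ e : Γ.E, ∃ p : List (DEdge Γ), Γ.IsPath v v p ∧ Γ.Reduced p ∧ ∃ b : Bool, (e, b) ∈ p)

/-- The product of two `X`-digraphs: vertices are pairs of vertices, edges are pairs of
equally-labeled edges. -/
def prod (Γ Δ : XDigraph X) : XDigraph X where
  V := Γ.V × Δ.V
  E := {ef : Γ.E × Δ.E // Γ.lab ef.1 = Δ.lab ef.2}
  o := fun ef => (Γ.o ef.1.1, Δ.o ef.1.2)
  t := fun ef => (Γ.t ef.1.1, Δ.t ef.1.2)
  lab := fun ef => Γ.lab ef.1.1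

/-- The edges of `Core(Γ, v)`: edges lying on some reduced closed path at `v`. -/
def CoreEdges (Γ : XDigraph X) (v : Γ.V) : Set Γ.E :=
  {e | ∃ p : List (DEdge Γ), Γ.IsPath v v p ∧ Γ.Reduced p ∧ ∃ b : Bool, (e, b) ∈ p}

/-- The edges of `Type(Γ) = ⋂_{u ∈ VΓ} Core(Γ, u)`. -/
def TypeEdges (Γ : XDigraph X) : Set Γ.E := ⋂ u : Γ.V, Γ.CoreEdges u

/-- The language of the subgraph of `Γ` spanned by the edge set `S`, at the vertex `v`:
labels of reduced closed paths at `v` using only edges of `S`. -/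
def LSetIn (Γ : XDigraph X) (S : Set Γ.E) (v : Γ.V) : Set (FreeGroup X) :=
  {g | ∃ p : List (DEdge Γ), Γ.IsPath v v p ∧ Γ.Reduced p ∧
    (∀ d ∈ p, d.1 ∈ S) ∧ g = Γ.plabel p}

end XDigraph

/-- An element of a free group is cyclically reduced if its first letter is not the
inverse of its last letter. -/
def IsCycRed {X : Type} [DecidableEq X] (g : FreeGroup X) : Prop :=
  ∀ x : X × Bool, (FreeGroup.toWord g).head? = some x →
    (FreeGroup.toWord g).getLast? ≠ some (x.1, !x.2)

namespace XDigraph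

variable {X : Type} {Γ : XDigraph X}

/-- Flip a directed edge. -/
def flipD (d : DEdge Γ) : DEdge Γ := (d.1, !d.2)

@[simp] lemma flipD_flipD (d : DEdge Γ) : flipD (flipD d) = d := by
  cases d with | mk e b => simp [flipD]

lemma flipD_inj {d d' : DEdge Γ} (h : flipD d = flipD d') : d = d' := by
  have := congrArg flipD h; simpa using this

lemma flipD_eq_iff {d d' : DEdge Γ} : flipD d = d' ↔ d = flipD d' := by
  constructor <;> rintro rfl <;> simp

@[simp] lemma dO_flipD (d : DEdge Γ) : Γ.dO (flipD d) = Γ.dT d := by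
  cases d with | mk e b => cases b <;> simp [flipD, dO, dT]

@[simp] lemma dT_flipD (d : DEdge Γ) : Γ.dT (flipD d) = Γ.dO d := by
  cases d with | mk e b => cases b <;> simp [flipD, dO, dT]

/-- Reverse of a path. -/
def revP (p : List (DEdge Γ)) : List (DEdge Γ) := (p.map flipD).reverse

@[simp] lemma revP_nil : (revP ([] : List (DEdge Γ))) = [] := rfl

lemma revP_cons (d : DEdge Γ) (p : List (DEdge Γ)) :
    revP (d :: p) = revP p ++ [flipD d] := by simp [revP]

@[simp] lemma head?_revP (p : List (DEdge Γ)) :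
    (revP p).head? = p.getLast?.map flipD := by simp [revP]

@[simp] lemma getLast?_revP (p : List (DEdge Γ)) :
    (revP p).getLast? = p.head?.map flipD := by simp [revP]

lemma revP_ne_nil {p : List (DEdge Γ)} (h : p ≠ []) : revP p ≠ [] := by
  intro hc
  apply h
  have := congrArg List.length hc
  simpa [revP, List.length_eq_zero_iff] using this

lemma isPath_nil {u w : Γ.V} : Γ.IsPath u w [] ↔ u = w := Iff.rfl

lemma isPath_cons {u w : Γ.V} {d : DEdge Γ} {p : List (DEdge Γ)} :
    Γ.IsPath u w (d :: p) ↔ Γ.dO d = u ∧ Γ.IsPath (Γ.dT d) w p := Iff.rfl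

lemma isPath_append {u w : Γ.V} {p q : List (DEdge Γ)} :
    Γ.IsPath u w (p ++ q) ↔ ∃ m, Γ.IsPath u m p ∧ Γ.IsPath m w q := by
  induction p generalizing u with
  | nil => simp [IsPath]
  | cons d p ih =>
    simp only [List.cons_append, isPath_cons, ih]
    tauto

lemma IsPath.revP {u w : Γ.V} {p : List (DEdge Γ)} (h : Γ.IsPath u w p) :
    Γ.IsPath w u (XDigraph.revP p) := by
  induction p generalizing u with
  | nil => simpa [IsPath] using h.symm
  | cons d p ih =>
    obtain ⟨rfl, hp⟩ := h
    rw [revP_cons]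
    exact isPath_append.2 ⟨Γ.dT d, ih hp, by simp [IsPath]⟩

lemma reduced_iff {p : List (DEdge Γ)} :
    Γ.Reduced p ↔ List.Chain' (fun d₁ d₂ => d₂ ≠ flipD d₁) p := Iff.rfl

lemma Reduced.revP {p : List (DEdge Γ)} (h : Γ.Reduced p) : Γ.Reduced (XDigraph.revP p) := by
  rw [reduced_iff, XDigraph.revP, List.Chain', List.isChain_reverse, List.isChain_map]
  refine h.imp ?_
  intro a b hab
  intro hc
  exact hab (by rw [flipD_inj hc]; simp [flipD])

lemma Reduced.take {p : List (DEdge Γ)} (h : Γ.Reduced p) (i : ℕ) : Γ.Reduced (p.take i) := by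
  have := (List.take_append_drop i p) ▸ h
  exact (List.isChain_append.1 this).1

lemma Reduced.drop {p : List (DEdge Γ)} (h : Γ.Reduced p) (i : ℕ) : Γ.Reduced (p.drop i) := by
  have := (List.take_append_drop i p) ▸ h
  exact (List.isChain_append.1 this).2.1

lemma isPath_end_unique {u w w' : Γ.V} {p : List (DEdge Γ)} (h : Γ.IsPath u w p)
    (h' : Γ.IsPath u w' p) : w = w' := by
  induction p generalizing u with
  | nil => exact h.symm.trans h'
  | cons d p ih => exact ih h.2 h'.2

lemma isPath_take_drop {u w : Γ.V} {p : List (DEdge Γ)} (hp : Γ.IsPath u w p)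
    (i : ℕ) (hi : i < p.length) :
    Γ.IsPath u (Γ.dO (p[i]'hi)) (p.take i) ∧ Γ.IsPath (Γ.dO (p[i]'hi)) w (p.drop i) := by
  have h1 : Γ.IsPath u w (p.take i ++ p.drop i) := by rwa [List.take_append_drop]
  obtain ⟨m, h2, h3⟩ := isPath_append.1 h1
  rw [List.drop_eq_getElem_cons hi] at h3
  obtain ⟨h4, h5⟩ := h3
  subst h4
  exact ⟨h2, by rw [List.drop_eq_getElem_cons hi]; exact ⟨rfl, h5⟩⟩

lemma isPath_take_succ {u w : Γ.V} {p : List (DEdge Γ)} (hp : Γ.IsPath u w p)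
    (i : ℕ) (hi : i < p.length) :
    Γ.IsPath u (Γ.dT (p[i]'hi)) (p.take (i + 1)) := by
  have h2 := (isPath_take_drop hp i hi).1
  have : p.take i ++ [p[i]'hi] = p.take (i+1) := List.take_concat_get' p i hi
  rw [← this]
  exact isPath_append.2 ⟨_, h2, ⟨rfl, rfl⟩⟩

lemma dO_head {w : Γ.V} {p : List (DEdge Γ)} {u : Γ.V} (hp : Γ.IsPath u w p)
    (hne : p ≠ []) (h0 : 0 < p.length) : Γ.dO (p[0]'h0) = u := by
  cases p with
  | nil => exact absurd rfl hne
  | cons d q => exact hp.1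

lemma exists_dO_eq_dT {v : Γ.V} {p : List (DEdge Γ)} (hp : Γ.IsPath v v p)
    {d : DEdge Γ} (hd : d ∈ p) :
    ∃ j, ∃ hj : j < p.length, Γ.dT d = Γ.dO (p[j]'hj) := by
  obtain ⟨i, hi, rfl⟩ := List.mem_iff_getElem.1 hd
  by_cases h : i + 1 < p.length
  · refine ⟨i + 1, h, ?_⟩
    have h1 := isPath_take_succ hp i hi
    have h2 := (isPath_take_drop hp (i+1) h).1
    exact isPath_end_unique h1 h2
  · have hlen : i = p.length - 1 := by omega
    have hpos : 0 < p.length := by omega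
    refine ⟨0, hpos, ?_⟩
    rw [dO_head hp (by intro hc; subst hc; simp at hi) hpos]
    -- dT of last edge is v
    have h1 := isPath_take_succ hp i hi
    have h2 : p.take (i+1) = p := by
      apply List.take_of_length_le; omega
    rw [h2] at h1
    exact isPath_end_unique h1 hp

end XDigraph


namespace XDigraph

variable {X : Type} {Γ : XDigraph X}

lemma reduceSelf {α : Type} [DecidableEq α] {L : List (α × Bool)}
    (h : List.Chain' (fun x y => ¬(x.1 = y.1 ∧ x.2 = !y.2)) L) : FreeGroup.reduce L = L := by
  induction L with
  | nil => rfl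
  | cons x L ih =>
    have hL := ih h.tail
    rw [FreeGroup.reduce.cons, hL]
    cases L with
    | nil => rfl
    | cons y t =>
      have hxy : ¬(x.1 = y.1 ∧ x.2 = !y.2) := (List.isChain_cons_cons.1 h).1
      simp [hxy]

lemma key_adj (hfold : Γ.Folded) {d d' : DEdge Γ} (hadj : Γ.dT d = Γ.dO d')
    (hred : d' ≠ flipD d) : ¬(Γ.lab d.1 = Γ.lab d'.1 ∧ d.2 = !d'.2) := by
  rintro ⟨hl, hb⟩
  apply hred
  rcases d with ⟨e, b⟩
  rcases d' with ⟨e', b'⟩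
  simp only [flipD]
  cases b' with
  | true =>
    have hb' : b = false := by simpa using hb
    subst hb'
    have he : e = e' := hfold.1 e e' (by simpa [dO, dT] using hadj) hl
    simp [he]
  | false =>
    have hb' : b = true := by simpa using hb
    subst hb'
    have he : e = e' := hfold.2 e e' (by simpa [dO, dT] using hadj) hl
    simp [he]

lemma letters_chain' (hfold : Γ.Folded) {u w : Γ.V} {p : List (DEdge Γ)}
    (hp : Γ.IsPath u w p) (hr : Γ.Reduced p) :
    List.Chain' (fun x y => ¬(x.1 = y.1 ∧ x.2 = !y.2))
      (p.map fun d => (Γ.lab d.1, d.2)) := by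
  rw [List.Chain', List.isChain_map]
  induction p generalizing u with
  | nil => exact List.isChain_nil
  | cons d p ih =>
    obtain ⟨rfl, hp⟩ := hp
    refine List.isChain_cons.2 ⟨?_, ih hp hr.tail⟩
    intro y hy
    cases p with
    | nil => simp at hy
    | cons d' q =>
      simp only [List.head?_cons, Option.mem_def, Option.some.injEq] at hy
      subst hy
      exact key_adj hfold hp.1.symm (List.isChain_cons_cons.1 hr).1

lemma toWord_plabel [DecidableEq X] (hfold : Γ.Folded) {u w : Γ.V} {p : List (DEdge Γ)}
    (hp : Γ.IsPath u w p) (hr : Γ.Reduced p) :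
    (Γ.plabel p).toWord = p.map fun d => (Γ.lab d.1, d.2) := by
  rw [plabel, FreeGroup.toWord_mk, reduceSelf (letters_chain' hfold hp hr)]

end XDigraph


/-- If `Γ` is a finite folded `X`-digraph, core with respect to `v`, and
`L(Γ, v)` contains a nontrivial cyclically reduced element, then `Type(Γ) = Γ`, i.e.
`Γ` is core with respect to every vertex `u`. -/
theorem type_eq_of_cyclically_reduced {X : Type} [DecidableEq X] (Γ : XDigraph X)
    [Finite Γ.V] [Finite Γ.E] (v : Γ.V) (hfold : Γ.Folded) (hcore : Γ.IsCore v)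
    (g : FreeGroup X) (hg : g ∈ Γ.LSet v) (hg1 : g ≠ 1) (hgc : IsCycRed g) :
    ∀ u : Γ.V, Γ.IsCore u := by
  classical
  obtain ⟨p, hpP, hpR, rfl⟩ := hg
  have hword : (Γ.plabel p).toWord = p.map (fun d => (Γ.lab d.1, d.2)) :=
    XDigraph.toWord_plabel hfold hpP hpR
  have hpne : p ≠ [] := by
    rintro rfl
    exact hg1 (FreeGroup.toWord_eq_nil_iff.1 hword)
  have hppos : 0 < p.length := List.length_pos_iff.2 hpne
  obtain ⟨f, pt, hpeq⟩ := List.exists_cons_of_ne_nil hpne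
  have hphead : p.head? = some f := by rw [hpeq]; rfl
  have hf0 : p[0]'hppos = f := by simp [hpeq]
  have hfO : Γ.dO f = v := by
    rw [hpeq] at hpP; exact hpP.1
  set l := p.getLast hpne with hldef
  have hplast : p.getLast? = some l := List.getLast?_eq_getLast hpne
  have hcyc : f ≠ XDigraph.flipD l := by
    intro hfl
    have h1 : (Γ.plabel p).toWord.head? = some (Γ.lab f.1, f.2) := by
      rw [hword, List.head?_map, hphead]; rfl
    have h2 : (Γ.plabel p).toWord.getLast? = some (Γ.lab l.1, l.2) := by
      rw [hword, List.getLast?_map, hplast]; rfl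
    apply hgc _ h1
    rw [h2, hfl]
    simp [XDigraph.flipD]
  intro u
  -- a shortest reduced path from u to a vertex on p
  have hex : ∃ n, ∃ r : List Γ.DEdge, ∃ i : ℕ, ∃ hi : i < p.length,
      Γ.Reduced r ∧ Γ.IsPath u (Γ.dO (p[i]'hi)) r ∧ r.length = n := by
    rcases hcore.1 u with rfl | ⟨s, hsP, hsR, d, hds, hd⟩
    · refine ⟨0, [], 0, hppos, List.isChain_nil, ?_, rfl⟩
      refine (XDigraph.isPath_nil).2 ?_
      rw [hf0]
      exact hfO.symm
    · obtain ⟨k, hk, hkd⟩ := List.mem_iff_getElem.1 hds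
      rcases hd with hd | hd
      · refine ⟨_, XDigraph.revP (s.take k), 0, hppos, (hsR.take k).revP, ?_, rfl⟩
        have h1 := (XDigraph.isPath_take_drop hsP k hk).1
        rw [hkd, hd] at h1
        have h2 := h1.revP
        rw [hf0, hfO]
        exact h2
      · refine ⟨_, XDigraph.revP (s.take (k+1)), 0, hppos, (hsR.take (k+1)).revP, ?_, rfl⟩
        have h1 := XDigraph.isPath_take_succ hsP k hk
        rw [hkd, hd] at h1
        have h2 := h1.revP
        rw [hf0, hfO]
        exact h2
  obtain ⟨r, i, hi, hrR, hrP, hrlen⟩ := Nat.find_spec hex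
  have hmin : ∀ (r' : List Γ.DEdge) (j : ℕ) (hj : j < p.length),
      Γ.Reduced r' → Γ.IsPath u (Γ.dO (p[j]'hj)) r' → r.length ≤ r'.length := by
    intro r' j hj h1 h2
    by_contra hc
    push_neg at hc
    have hlt : r'.length < Nat.find hex := by omega
    exact Nat.find_min hex hlt ⟨r', j, hj, h1, h2, rfl⟩
  have Hr : ∀ x ∈ r.getLast?, ∀ d ∈ p, x ≠ d ∧ x ≠ XDigraph.flipD d := by
    intro x hx d hd
    obtain ⟨hrne, hxeq⟩ := List.mem_getLast?_eq_getLast hx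
    have hrpos : 0 < r.length := List.length_pos_iff.2 hrne
    have hsplit : r.dropLast ++ [x] = r := by
      rw [hxeq]; exact List.dropLast_append_getLast hrne
    have hrP' : Γ.IsPath u (Γ.dO (p[i]'hi)) (r.dropLast ++ [x]) := by
      rw [hsplit]; exact hrP
    obtain ⟨m, hm1, hm2⟩ := XDigraph.isPath_append.1 hrP'
    obtain ⟨hmO, -⟩ := hm2
    have hdropR : Γ.Reduced r.dropLast := by
      rw [List.dropLast_eq_take]; exact hrR.take _
    have hlen : r.dropLast.length < r.length := by
      rw [List.length_dropLast]; omega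
    constructor
    · rintro rfl
      obtain ⟨j, hj, hh⟩ := List.mem_iff_getElem.1 hd
      have := hmin r.dropLast j hj hdropR (by rw [hh, hmO]; exact hm1)
      omega
    · intro hxd
      obtain ⟨j, hj, hdT⟩ := XDigraph.exists_dO_eq_dT hpP hd
      have hOx : Γ.dO x = Γ.dT d := by rw [hxd]; simp
      have := hmin r.dropLast j hj hdropR (by rw [← hdT, ← hOx, hmO]; exact hm1)
      omega
  -- the suffix β = p.drop i and the "prefix" α'
  have hβ : Γ.IsPath (Γ.dO (p[i]'hi)) v (p.drop i) := (XDigraph.isPath_take_drop hpP i hi).2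
  have hβR : Γ.Reduced (p.drop i) := hpR.drop i
  have hβne : p.drop i ≠ [] := by
    intro hc; have := congrArg List.length hc; simp at this; omega
  have hβhead : (p.drop i).head? = some (p[i]'hi) := by
    rw [List.drop_eq_getElem_cons hi]; rfl
  have hβlast : (p.drop i).getLast? = some l := by
    rw [← hplast]
    conv_rhs => rw [← List.take_append_drop i p]
    rw [List.getLast?_append_of_ne_nil _ hβne]
  obtain ⟨α', hαne, hαP, hαR, hαhead, hαsub⟩ :
      ∃ α' : List Γ.DEdge, α' ≠ [] ∧ Γ.IsPath v (Γ.dO (p[i]'hi)) α' ∧ Γ.Reduced α' ∧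
        α'.head? = some f ∧ ∀ d ∈ α', d ∈ p := by
    rcases Nat.eq_zero_or_pos i with rfl | hip
    · refine ⟨p, hpne, ?_, hpR, hphead, fun d hd => hd⟩
      rw [hf0, hfO]; exact hpP
    · refine ⟨p.take i, ?_, (XDigraph.isPath_take_drop hpP i hi).1, hpR.take i, ?_,
        fun d hd => List.take_subset i p hd⟩
      · intro hc
        have := congrArg List.length hc
        rw [List.length_take] at this
        simp only [List.length_nil] at this
        omega
      · rw [hpeq]
        cases i with
        | zero => omega
        | succ n => simp
  have hαlast? : α'.getLast? = some (α'.getLast hαne) := List.getLast?_eq_getLast hαne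
  have hαlastmem : α'.getLast hαne ∈ p := hαsub _ (List.getLast_mem hαne)
  -- the sandwich construction
  have key : ∀ Q : List Γ.DEdge, Q ≠ [] → Γ.IsPath v v Q → Γ.Reduced Q →
      ∃ A, Γ.IsPath u u A ∧ Γ.Reduced A ∧ ∀ d ∈ Q, d ∈ A := by
    intro Q hQne hQP hQR
    obtain ⟨a, hQhead⟩ : ∃ a, Q.head? = some a := by
      cases Q with
      | nil => exact absurd rfl hQne
      | cons x q => exact ⟨x, rfl⟩
    obtain ⟨b, hQlast⟩ : ∃ b, Q.getLast? = some b :=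
      ⟨Q.getLast hQne, List.getLast?_eq_getLast hQne⟩
    obtain ⟨B, hBne, hBP, hBR, hBlast, hBhead⟩ :
        ∃ B : List Γ.DEdge, B ≠ [] ∧ Γ.IsPath (Γ.dO (p[i]'hi)) v B ∧ Γ.Reduced B ∧
          (∀ x ∈ B.getLast?, a ≠ XDigraph.flipD x) ∧
          (∀ y ∈ B.head?, ∀ x ∈ r.getLast?, y ≠ XDigraph.flipD x) := by
      by_cases hBa : a = XDigraph.flipD l
      · refine ⟨XDigraph.revP α', XDigraph.revP_ne_nil hαne, hαP.revP, hαR.revP, ?_, ?_⟩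
        · intro x hx
          rw [XDigraph.getLast?_revP, hαhead] at hx
          simp only [Option.map_some, Option.mem_def, Option.some.injEq] at hx
          subst hx
          rw [hBa]
          simpa using hcyc.symm
        · intro y hy x hx
          rw [XDigraph.head?_revP, hαlast?] at hy
          simp only [Option.map_some, Option.mem_def, Option.some.injEq] at hy
          subst hy
          intro hc
          exact (Hr x hx _ hαlastmem).1 (XDigraph.flipD_inj hc).symm
      · refine ⟨p.drop i, hβne, hβ, hβR, ?_, ?_⟩
        · intro x hx
          rw [hβlast] at hx
          simp only [Option.mem_def, Option.some.injEq] at hx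
          subst hx
          exact hBa
        · intro y hy x hx
          rw [hβhead] at hy
          simp only [Option.mem_def, Option.some.injEq] at hy
          subst hy
          intro hc
          exact (Hr x hx _ (List.getElem_mem hi)).2 (XDigraph.flipD_eq_iff.1 hc.symm)
    obtain ⟨C, hCne, hCP, hCR, hChead, hClastr⟩ :
        ∃ C : List Γ.DEdge, C ≠ [] ∧ Γ.IsPath v (Γ.dO (p[i]'hi)) C ∧ Γ.Reduced C ∧
          (∀ y ∈ C.head?, y ≠ XDigraph.flipD b) ∧
          (∀ x ∈ C.getLast?, ∀ z ∈ r.getLast?, XDigraph.flipD z ≠ XDigraph.flipD x) := by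
      by_cases hCb : b = XDigraph.flipD f
      · refine ⟨XDigraph.revP (p.drop i), XDigraph.revP_ne_nil hβne, hβ.revP, hβR.revP, ?_, ?_⟩
        · intro y hy
          rw [XDigraph.head?_revP, hβlast] at hy
          simp only [Option.map_some, Option.mem_def, Option.some.injEq] at hy
          subst hy
          rw [hCb]
          simpa using hcyc.symm
        · intro x hx z hz
          rw [XDigraph.getLast?_revP, hβhead] at hx
          simp only [Option.map_some, Option.mem_def, Option.some.injEq] at hx
          subst hx
          intro hc
          exact (Hr z hz _ (List.getElem_mem hi)).2 (XDigraph.flipD_inj hc)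
      · refine ⟨α', hαne, hαP, hαR, ?_, ?_⟩
        · intro y hy
          rw [hαhead] at hy
          simp only [Option.mem_def, Option.some.injEq] at hy
          subst hy
          intro hc
          exact hCb (XDigraph.flipD_eq_iff.1 hc.symm)
        · intro x hx z hz
          rw [hαlast?] at hx
          simp only [Option.mem_def, Option.some.injEq] at hx
          subst hx
          intro hc
          exact (Hr z hz _ hαlastmem).1 (XDigraph.flipD_inj hc)
    refine ⟨r ++ (B ++ (Q ++ (C ++ XDigraph.revP r))), ?_, ?_, ?_⟩
    · refine XDigraph.isPath_append.2 ⟨_, hrP, ?_⟩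
      refine XDigraph.isPath_append.2 ⟨v, hBP, ?_⟩
      refine XDigraph.isPath_append.2 ⟨v, hQP, ?_⟩
      exact XDigraph.isPath_append.2 ⟨_, hCP, hrP.revP⟩
    · refine List.isChain_append.2 ⟨hrR, ?_, ?_⟩
      · refine List.isChain_append.2 ⟨hBR, ?_, ?_⟩
        · refine List.isChain_append.2 ⟨hQR, ?_, ?_⟩
          · refine List.isChain_append.2 ⟨hCR, hrR.revP, ?_⟩
            intro x hx y hy
            rw [XDigraph.head?_revP] at hy
            obtain ⟨z, hz, rfl⟩ := Option.map_eq_some_iff.1 hy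
            exact hClastr x hx z hz
          · intro x hx y hy
            rw [List.head?_append_of_ne_nil _ hCne] at hy
            rw [hQlast] at hx
            simp only [Option.mem_def, Option.some.injEq] at hx
            subst hx
            exact hChead y hy
        · intro x hx y hy
          rw [List.head?_append_of_ne_nil _ hQne] at hy
          rw [hQhead] at hy
          simp only [Option.mem_def, Option.some.injEq] at hy
          subst hy
          exact hBlast x hx
      · intro x hx y hy
        rw [List.head?_append_of_ne_nil _ hBne] at hy
        exact hBhead y hy x hx
    · intro d hd
      simp only [List.mem_append]
      tauto
  constructor
  · intro w'
    right
    rcases hcore.1 w' with rfl | ⟨q, hqP, hqR, d, hdq, hde⟩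
    · obtain ⟨A, h1, h2, h3⟩ := key p hpne hpP hpR
      refine ⟨A, h1, h2, f, h3 f ?_, Or.inl hfO⟩
      rw [hpeq]; exact List.mem_cons_self
    · obtain ⟨A, h1, h2, h3⟩ := key q (by rintro rfl; simp at hdq) hqP hqR
      exact ⟨A, h1, h2, d, h3 d hdq, hde⟩
  · intro e
    obtain ⟨q, hqP, hqR, bb, hbq⟩ := hcore.2 e
    obtain ⟨A, h1, h2, h3⟩ := key q (by rintro rfl; simp at hbq) hqP hqR
    exact ⟨A, h1, h2, bb, h3 _ hbq⟩
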